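/- For any Hermitian matrix H on an n-qubit system A and any single-qubit pure state |r⟩ on a qubit system R, ‖H‖₁ = 2 · max over unitaries U on AR of Tr[(I_A ⊗ |0⟩⟨0|_R) U (H ⊗ |r⟩⟨r|) U†] − Tr H. -/

import Mathlib

open Matrix Kronecker Complex

/-- Trace norm of a Hermitian matrix: sum of absolute values of eigenvalues. -/
noncomputable def traceNorm {n : Type*} [Fintype n] [DecidableEq n] (H : Matrix n n ℂ) : ℝ :=
  if h : H.IsHermitian then ∑ i, |h.eigenvalues i| else 0

section helpers
variable {ι : Type*} [Fintype ι] [DecidableEq ι]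

lemma trace_diag_conj (p d : ι → ℂ) (A : Matrix ι ι ℂ) :
    (Matrix.diagonal p * (A * Matrix.diagonal d * Aᴴ)).trace
      = ∑ a, ∑ b, p a * d b * (A a b * (starRingEnd ℂ) (A a b)) := by
  simp only [Matrix.trace, Matrix.diag_apply, Matrix.mul_apply, Matrix.diagonal_apply,
    Matrix.conjTranspose_apply, ite_mul, zero_mul, Finset.sum_ite_eq, Finset.sum_ite_eq',
    Finset.mem_univ, if_true, mul_ite, mul_zero, RCLike.star_def]
  refine Finset.sum_congr rfl fun a _ => ?_
  rw [Finset.mul_sum]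
  exact Finset.sum_congr rfl fun b _ => by ring

lemma kron_conjTranspose {m p : Type*} (A : Matrix m m ℂ) (B : Matrix p p ℂ) :
    (A ⊗ₖ B)ᴴ = Aᴴ ⊗ₖ Bᴴ := by
  ext ⟨i, k⟩ ⟨j, l⟩
  simp [Matrix.conjTranspose_apply, Matrix.kroneckerMap_apply, star_mul']

lemma col_norm (A : Matrix ι ι ℂ) (hA : Aᴴ * A = 1) (b : ι) :
    ∑ a, Complex.normSq (A a b) = 1 := by
  have h1 : (Aᴴ * A) b b = (1 : Matrix ι ι ℂ) b b := by rw [hA]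
  simp only [Matrix.mul_apply, Matrix.conjTranspose_apply, Matrix.one_apply_eq] at h1
  have h2 : ((∑ a, Complex.normSq (A a b) : ℝ) : ℂ) = ((1 : ℝ) : ℂ) := by
    push_cast
    rw [← h1]
    exact Finset.sum_congr rfl fun a _ => by
      rw [Complex.normSq_eq_conj_mul_self]; rfl
  exact_mod_cast h2

end helpers

/-- `‖H‖₁ = 2·max_U Tr[(I_A ⊗ |0⟩⟨0|_R) U (H ⊗ |r⟩⟨r|) U†] − Tr H`. -/
theorem traceNorm_eq_two_max_sub_trace (n : ℕ)
    (H : Matrix (Fin (2 ^ n)) (Fin (2 ^ n)) ℂ) (hH : H.IsHermitian)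
    (r : Fin 2 → ℂ) (hr : star r ⬝ᵥ r = 1) :
    ∃ x : ℝ,
      IsGreatest {y : ℝ | ∃ U ∈ Matrix.unitaryGroup (Fin (2 ^ n) × Fin 2) ℂ,
          (((1 : Matrix (Fin (2 ^ n)) (Fin (2 ^ n)) ℂ) ⊗ₖ
              Matrix.single (0 : Fin 2) (0 : Fin 2) (1 : ℂ)) *
            (U * (H ⊗ₖ Matrix.vecMulVec r (star r)) * star U)).trace = (y : ℂ)} x ∧
      (traceNorm H : ℂ) = 2 * (x : ℂ) - H.trace := by
  classical
  set ev : Fin (2 ^ n) → ℝ := hH.eigenvalues with hev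
  set x : ℝ := ∑ i, max (ev i) 0 with hxdef
  -- diagonal data
  set e : Fin 2 → ℂ := fun k => if k = 0 then 1 else 0 with he
  set d : Fin (2 ^ n) × Fin 2 → ℂ := fun z => (ev z.1 : ℂ) * e z.2 with hd
  set p : Fin (2 ^ n) × Fin 2 → ℂ := fun z => e z.2 with hp
  set dR : Fin (2 ^ n) × Fin 2 → ℝ := fun z => if z.2 = 0 then ev z.1 else 0 with hdR
  set pR : Fin (2 ^ n) × Fin 2 → ℝ := fun z => if z.2 = 0 then 1 else 0 with hpR
  have hdcast : ∀ z, d z = ((dR z : ℝ) : ℂ) := by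
    intro z; by_cases h : z.2 = 0 <;> simp [hd, hdR, he, h]
  have hpcast : ∀ z, p z = ((pR z : ℝ) : ℂ) := by
    intro z; by_cases h : z.2 = 0 <;> simp [hp, hpR, he, h]
  -- E00 is diagonal
  have hE : Matrix.single (0 : Fin 2) (0 : Fin 2) (1 : ℂ) = Matrix.diagonal e := by
    ext k l
    fin_cases k <;> fin_cases l <;>
      simp [Matrix.single, Matrix.diagonal_apply, he]
  have hP : ((1 : Matrix (Fin (2 ^ n)) (Fin (2 ^ n)) ℂ) ⊗ₖ
      Matrix.single (0 : Fin 2) (0 : Fin 2) (1 : ℂ)) = Matrix.diagonal p := by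
    rw [hE, ← Matrix.diagonal_one, Matrix.diagonal_kronecker_diagonal]
    simp only [one_mul]
    rfl
  -- the 2x2 unitary W
  set W : Matrix (Fin 2) (Fin 2) ℂ :=
    !![(starRingEnd ℂ) (r 0), (starRingEnd ℂ) (r 1); -(r 1), r 0] with hWdef
  have hr' : (starRingEnd ℂ) (r 0) * r 0 + (starRingEnd ℂ) (r 1) * r 1 = 1 := by
    simpa [dotProduct, Fin.sum_univ_two, RCLike.star_def] using hr
  have hWW : W * Wᴴ = 1 := by
    ext i j
    fin_cases i <;> fin_cases j <;>
      simp [hWdef, Matrix.mul_apply, Fin.sum_univ_two, Matrix.one_apply,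
        Matrix.conjTranspose_apply] <;>
      ring_nf <;> linear_combination hr'
  have hWmem : W ∈ Matrix.unitaryGroup (Fin 2) ℂ := by
    rw [Matrix.mem_unitaryGroup_iff, Matrix.star_eq_conjTranspose]; exact hWW
  have hWW' : Wᴴ * W = 1 := by
    have := Matrix.mem_unitaryGroup_iff'.mp hWmem
    rwa [Matrix.star_eq_conjTranspose] at this
  have hrr : Matrix.vecMulVec r (star r) = Wᴴ * Matrix.diagonal e * W := by
    rw [← hE]
    ext i j
    fin_cases i <;> fin_cases j <;>
      simp [hWdef, Matrix.mul_apply, Fin.sum_univ_two, Matrix.vecMulVec_apply,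
        Matrix.conjTranspose_apply, Matrix.single, RCLike.star_def, mul_comm]
  -- V and Q
  set V : Matrix (Fin (2 ^ n)) (Fin (2 ^ n)) ℂ := (hH.eigenvectorUnitary : Matrix (Fin (2 ^ n)) (Fin (2 ^ n)) ℂ) with hVdef
  have hVmem : V ∈ Matrix.unitaryGroup (Fin (2 ^ n)) ℂ := (hH.eigenvectorUnitary).2
  have hVV : V * Vᴴ = 1 := by
    have := Matrix.mem_unitaryGroup_iff.mp hVmem
    rwa [Matrix.star_eq_conjTranspose] at this
  have hVV' : Vᴴ * V = 1 := by
    have := Matrix.mem_unitaryGroup_iff'.mp hVmem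
    rwa [Matrix.star_eq_conjTranspose] at this
  set Q : Matrix (Fin (2 ^ n) × Fin 2) (Fin (2 ^ n) × Fin 2) ℂ := V ⊗ₖ Wᴴ with hQdef
  have hQstar : Qᴴ = Vᴴ ⊗ₖ W := by
    rw [hQdef, kron_conjTranspose, Matrix.conjTranspose_conjTranspose]
  have hQQ : Q * Qᴴ = 1 := by
    rw [hQdef, hQstar, ← Matrix.mul_kronecker_mul, hVV, hWW', Matrix.one_kronecker_one]
  have hQmem : Q ∈ Matrix.unitaryGroup (Fin (2 ^ n) × Fin 2) ℂ := by
    rw [Matrix.mem_unitaryGroup_iff, Matrix.star_eq_conjTranspose]; exact hQQ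
  have hQQ' : Qᴴ * Q = 1 := by
    have := Matrix.mem_unitaryGroup_iff'.mp hQmem
    rwa [Matrix.star_eq_conjTranspose] at this
  -- M = Q D Q†
  have hM : H ⊗ₖ Matrix.vecMulVec r (star r) = Q * Matrix.diagonal d * Qᴴ := by
    conv_lhs => rw [hH.spectral_theorem, Unitary.conjStarAlgAut_apply, hrr]
    rw [Matrix.star_eq_conjTranspose, Matrix.mul_kronecker_mul, Matrix.mul_kronecker_mul,
      Matrix.diagonal_kronecker_diagonal, hQstar, hQdef]
    rfl
  -- bounds on pR
  have hpR0 : ∀ a, 0 ≤ pR a := by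
    intro a; rw [hpR]; by_cases h : a.2 = 0 <;> simp [h]
  have hpR1 : ∀ a, pR a ≤ 1 := by
    intro a; rw [hpR]; by_cases h : a.2 = 0 <;> simp [h]
  -- real-valued trace formula
  have key : ∀ T : Matrix (Fin (2 ^ n) × Fin 2) (Fin (2 ^ n) × Fin 2) ℂ,
      (Matrix.diagonal p * (T * Matrix.diagonal d * Tᴴ)).trace
        = ((∑ a, ∑ b, pR a * dR b * Complex.normSq (T a b) : ℝ) : ℂ) := by
    intro T
    rw [trace_diag_conj]
    push_cast
    refine Finset.sum_congr rfl fun a _ => Finset.sum_congr rfl fun b _ => ?_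
    rw [hdcast, hpcast, Complex.mul_conj]
  -- the upper bound
  have bound : ∀ T : Matrix (Fin (2 ^ n) × Fin 2) (Fin (2 ^ n) × Fin 2) ℂ, Tᴴ * T = 1 →
      (∑ a, ∑ b, pR a * dR b * Complex.normSq (T a b)) ≤ x := by
    intro T hT
    rw [Finset.sum_comm]
    have hx2 : x = ∑ b : Fin (2 ^ n) × Fin 2, max (dR b) 0 := by
      rw [hxdef, Fintype.sum_prod_type]
      refine Finset.sum_congr rfl fun i _ => ?_
      rw [Fin.sum_univ_two]
      simp [hdR]
    rw [hx2]
    refine Finset.sum_le_sum fun b _ => ?_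
    have hstep : ∑ a, pR a * dR b * Complex.normSq (T a b)
        = dR b * ∑ a, pR a * Complex.normSq (T a b) := by
      rw [Finset.mul_sum]; exact Finset.sum_congr rfl fun a _ => by ring
    rw [hstep]
    have hc0 : 0 ≤ ∑ a, pR a * Complex.normSq (T a b) :=
      Finset.sum_nonneg fun a _ => mul_nonneg (hpR0 a) (Complex.normSq_nonneg _)
    have hc1 : ∑ a, pR a * Complex.normSq (T a b) ≤ 1 := by
      calc ∑ a, pR a * Complex.normSq (T a b) ≤ ∑ a, Complex.normSq (T a b) :=
            Finset.sum_le_sum fun a _ => by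
              have := mul_le_mul_of_nonneg_right (hpR1 a) (Complex.normSq_nonneg (T a b))
              simpa using this
        _ = 1 := col_norm T hT b
    rcases le_or_gt 0 (dR b) with h | h
    · calc dR b * ∑ a, pR a * Complex.normSq (T a b) ≤ dR b * 1 :=
            mul_le_mul_of_nonneg_left hc1 h
        _ = dR b := mul_one _
        _ ≤ max (dR b) 0 := le_max_left _ _
    · refine le_trans ?_ (le_max_right _ _)
      exact mul_nonpos_iff.mpr (Or.inr ⟨h.le, hc0⟩)
  -- the permutation achieving the maximum
  set f : Fin (2 ^ n) × Fin 2 → Fin (2 ^ n) × Fin 2 :=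
    fun z => (z.1, if ev z.1 < 0 then z.2 + 1 else z.2) with hf
  have hff : ∀ z, f (f z) = z := by
    rintro ⟨i, k⟩
    by_cases h : ev i < 0
    · simp only [hf, h, if_true]
      congr 1
      fin_cases k <;> rfl
    · simp [hf, h]
  have hfinj : Function.Injective f := Function.Involutive.injective hff
  set T : Matrix (Fin (2 ^ n) × Fin 2) (Fin (2 ^ n) × Fin 2) ℂ :=
    Matrix.of (fun a b => if a = f b then 1 else 0) with hT
  have hTT : Tᴴ * T = 1 := by
    ext b c
    simp only [Matrix.mul_apply, Matrix.conjTranspose_apply, hT, Matrix.of_apply,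
      ite_mul, one_mul, zero_mul, mul_ite, mul_one, mul_zero, Matrix.one_apply]
    rw [Finset.sum_ite_eq' Finset.univ (f c)]
    simp only [Finset.mem_univ, if_true, apply_ite (star : ℂ → ℂ), star_one, star_zero]
    simp [hfinj.eq_iff, eq_comm]
  have hTmem : T ∈ Matrix.unitaryGroup (Fin (2 ^ n) × Fin 2) ℂ := by
    rw [Matrix.mem_unitaryGroup_iff', Matrix.star_eq_conjTranspose]; exact hTT
  have hTval : (Matrix.diagonal p * (T * Matrix.diagonal d * Tᴴ)).trace = (x : ℂ) := by
    rw [trace_diag_conj, Finset.sum_comm]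
    have h1 : ∀ b, (∑ a, p a * d b * (T a b * (starRingEnd ℂ) (T a b))) = p (f b) * d b := by
      intro b
      have : ∀ a, p a * d b * (T a b * (starRingEnd ℂ) (T a b))
          = if a = f b then p a * d b else 0 := by
        intro a
        by_cases h : a = f b <;> simp [hT, h]
      rw [Finset.sum_congr rfl fun a _ => this a, Finset.sum_ite_eq' Finset.univ (f b)]
      simp
    rw [Finset.sum_congr rfl fun b _ => h1 b, Fintype.sum_prod_type]
    have h2 : ∀ i : Fin (2 ^ n), (∑ k : Fin 2, p (f (i, k)) * d (i, k))
        = ((max (ev i) 0 : ℝ) : ℂ) := by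
      intro i
      rw [Fin.sum_univ_two]
      by_cases h : ev i < 0
      · simp [hf, hd, hp, he, h, max_eq_right h.le]
      · simp [hf, hd, hp, he, h, max_eq_left (not_lt.mp h)]
    rw [Finset.sum_congr rfl fun i _ => h2 i, hxdef]
    push_cast
    rfl
  -- assemble
  refine ⟨x, ⟨⟨T * star Q, mul_mem hTmem (Unitary.star_mem hQmem), ?_⟩, ?_⟩, ?_⟩
  · -- achieves the value x
    have hrw : T * star Q * (H ⊗ₖ Matrix.vecMulVec r (star r)) * star (T * star Q)
        = T * Matrix.diagonal d * Tᴴ := by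
      rw [hM]
      simp only [Matrix.star_eq_conjTranspose, Matrix.conjTranspose_mul,
        Matrix.conjTranspose_conjTranspose, Matrix.mul_assoc]
      rw [← Matrix.mul_assoc Qᴴ Q, hQQ', Matrix.one_mul,
        ← Matrix.mul_assoc Qᴴ Q, hQQ', Matrix.one_mul]
    rw [hP, hrw, hTval]
  · -- upper bound
    rintro y ⟨U, hU, hy⟩
    have hUQ : (U * Q)ᴴ * (U * Q) = 1 := by
      have := Matrix.mem_unitaryGroup_iff'.mp (mul_mem hU hQmem)
      rwa [Matrix.star_eq_conjTranspose] at this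
    have hrw : U * (H ⊗ₖ Matrix.vecMulVec r (star r)) * star U
        = (U * Q) * Matrix.diagonal d * (U * Q)ᴴ := by
      rw [hM]
      simp only [Matrix.star_eq_conjTranspose, Matrix.conjTranspose_mul, Matrix.mul_assoc]
    rw [hP, hrw, key] at hy
    have : y = ∑ a, ∑ b, pR a * dR b * Complex.normSq ((U * Q) a b) :=
      Complex.ofReal_injective hy.symm
    rw [this]
    exact bound _ hUQ
  · -- the trace identity
    have htr : H.trace = ((∑ i, ev i : ℝ) : ℂ) := by
      conv_lhs => rw [hH.spectral_theorem, Unitary.conjStarAlgAut_apply]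
      rw [Matrix.trace_mul_comm, ← Matrix.mul_assoc, Matrix.star_eq_conjTranspose, hVV',
        Matrix.one_mul, Matrix.trace_diagonal]
      push_cast
      rfl
    have habs : ∑ i, |ev i| = 2 * x - ∑ i, ev i := by
      rw [hxdef, Finset.mul_sum, ← Finset.sum_sub_distrib]
      refine Finset.sum_congr rfl fun i _ => ?_
      rcases le_or_gt 0 (ev i) with h | h
      · rw [_root_.abs_of_nonneg h, max_eq_left h]; ring
      · rw [_root_.abs_of_neg h, max_eq_right h.le]; ring
    rw [traceNorm, dif_pos hH, htr, ← hev]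
    rw [habs]
    push_cast
    ring
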